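/- Let G be an abelian countable group, T an i.m.p. (C,F)-action of G with the large-holes condition of Theorem 2.8, and let C := C_1 + ⋯ + C_n. Then for arbitrary measurable A, B ⊆ [0]_0 (the base of measure μ([0]_0) = 1): Σ_{g ∈ F_n − F_n} μ(A ∩ T_g B) ≤ min(μ(A), μ(B)) · Σ_{g ∈ F_n − F_n} μ([0]_0 ∩ T_g [0]_0), and moreover Σ_{g ∈ F_n − F_n} μ([0]_0 ∩ T_g [0]_0) = #C. -/

import Mathlib

open MeasureTheory Filter Topology
open scoped ENNReal

/-- Claim 4 in the proof of Theorem 2.8: for an i.m.p. (C,F)-action of an abelian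
group satisfying the large-holes condition, the correlation sums over `E = F_n − F_n`
of arbitrary subsets of the base `Y = [0]_0` are dominated by
`min(μ(A),μ(B)) · Σ_{g∈E} μ(Y ∩ T_g Y)`, and moreover `Σ_{g∈E} μ(Y ∩ T_g Y) = #C`. -/
theorem stmt13 {G : Type*} [AddCommGroup G] [Countable G]
    {X : Type*} [MeasurableSpace X] (μ : Measure X) [SigmaFinite μ]
    (hinf : μ Set.univ = ⊤)
    (T : G → X → X) (hmp : ∀ g, MeasurePreserving (T g) μ μ)
    (hadd : ∀ g h x, T (g + h) x = T g (T h x)) (hzero : ∀ x, T 0 x = x)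
    (Y : Set X) (hY : MeasurableSet Y) (hμY : μ Y = 1)
    (V : G → Set X) (hVmeas : ∀ c, MeasurableSet (V c))
    (C E : Finset G) (hCne : C.Nonempty)
    (hbase : Y = ⋃ c ∈ C, V c)
    (hdisj : ∀ c ∈ C, ∀ c' ∈ C, c ≠ c' → Disjoint (V c) (V c'))
    (hμV : ∀ c ∈ C, μ (V c) = 1 / (C.card : ℝ≥0∞))
    (hdiffE : ∀ c ∈ C, ∀ c' ∈ C, c - c' ∈ E)
    (hsupport : ∀ g ∈ E, ∀ c ∈ C, ∀ c' ∈ C, g ≠ c - c' → μ (V c ∩ T g '' V c') = 0)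
    (hcopy : ∀ c ∈ C, ∀ c' ∈ C, μ (symmDiff (V c) (T (c - c') '' V c')) = 0) :
    (∀ A B : Set X, A ⊆ Y → B ⊆ Y → MeasurableSet A → MeasurableSet B →
      ∑ g ∈ E, μ (A ∩ T g '' B) ≤ min (μ A) (μ B) * ∑ g ∈ E, μ (Y ∩ T g '' Y)) ∧
    ∑ g ∈ E, μ (Y ∩ T g '' Y) = (C.card : ℝ≥0∞) := by
  classical
  set n : ℝ≥0∞ := (C.card : ℝ≥0∞) with hn
  have hn0 : n ≠ 0 := by
    simp [hn, Finset.card_eq_zero, hCne.ne_empty]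
  have hntop : n ≠ ⊤ := by simp [hn]
  have hlinv : ∀ (g : G) (x : X), T (-g) (T g x) = x := by
    intro g x
    rw [← hadd]; simp [hzero]
  have himg : ∀ (g : G) (S : Set X), T g '' S = T (-g) ⁻¹' S := by
    intro g S
    ext x
    constructor
    · rintro ⟨y, hy, rfl⟩; simpa [hlinv g y] using hy
    · intro hx
      exact ⟨T (-g) x, hx, by rw [← hadd]; simp [hzero]⟩
  have hinj : ∀ g : G, Function.Injective (T g) := by
    intro g x y hxy
    have := congrArg (T (-g)) hxy
    rwa [hlinv, hlinv] at this
  have hmu_img : ∀ (g : G) (S : Set X), MeasurableSet S → μ (T g '' S) = μ S := by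
    intro g S hS
    rw [himg]
    exact (hmp (-g)).measure_preimage hS.nullMeasurableSet
  have hmeas_img : ∀ (g : G) (S : Set X), MeasurableSet S → MeasurableSet (T g '' S) := by
    intro g S hS
    rw [himg]
    exact (hmp (-g)).measurable hS
  -- decomposition of subsets of Y
  have hsum_decomp : ∀ A : Set X, MeasurableSet A → A ⊆ Y → μ A = ∑ c ∈ C, μ (A ∩ V c) := by
    intro A hA hAY
    have hAeq : A = ⋃ c ∈ C, (A ∩ V c) := by
      ext x
      simp only [Set.mem_iUnion, Set.mem_inter_iff]
      constructor
      · intro hx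
        have := hAY hx
        rw [hbase] at this
        simp only [Set.mem_iUnion] at this
        obtain ⟨c, hc, hxc⟩ := this
        exact ⟨c, hc, hx, hxc⟩
      · rintro ⟨c, hc, hx, -⟩; exact hx
    have hPD : (C : Set G).PairwiseDisjoint (fun c => A ∩ V c) :=
      fun c hc c' hc' hne =>
        (hdisj c hc c' hc' hne).mono Set.inter_subset_right Set.inter_subset_right
    have h := measure_biUnion_finset (μ := μ) hPD (fun c _ => hA.inter (hVmeas c))
    rw [← hAeq] at h
    exact h
  -- key copy measure
  have hcopy' : ∀ c ∈ C, ∀ c' ∈ C, μ (V c ∩ T (c - c') '' V c') = 1 / n := by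
    intro c hc c' hc'
    set W := T (c - c') '' V c' with hW
    have hdiff0 : μ (V c \ W) = 0 := by
      refine measure_mono_null ?_ (hcopy c hc c' hc')
      rw [Set.symmDiff_def]
      exact Set.subset_union_left
    have hle : μ (V c) ≤ μ (V c ∩ W) := by
      calc μ (V c) ≤ μ (V c ∩ W) + μ (V c \ W) := measure_le_inter_add_diff μ (V c) W
        _ = μ (V c ∩ W) := by rw [hdiff0, add_zero]
    have hge : μ (V c ∩ W) ≤ μ (V c) := measure_mono Set.inter_subset_left
    rw [← hμV c hc]
    exact le_antisymm hge hle
  -- per-g decomposition of Y ∩ T g '' Y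
  have hYg : ∀ g : G, μ (Y ∩ T g '' Y) = ∑ p ∈ C ×ˢ C, μ (V p.1 ∩ T g '' V p.2) := by
    intro g
    have heq : Y ∩ T g '' Y = ⋃ p ∈ C ×ˢ C, (V p.1 ∩ T g '' V p.2) := by
      ext x
      simp only [Set.mem_iUnion, Set.mem_inter_iff, Finset.mem_product]
      constructor
      · rintro ⟨hxY, y, hyY, rfl⟩
        rw [hbase] at hxY hyY
        simp only [Set.mem_iUnion] at hxY hyY
        obtain ⟨c, hc, hxc⟩ := hxY
        obtain ⟨c', hc', hyc'⟩ := hyY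
        exact ⟨(c, c'), ⟨hc, hc'⟩, hxc, ⟨y, hyc', rfl⟩⟩
      · rintro ⟨⟨c, c'⟩, ⟨hc, hc'⟩, hxc, y, hyc', rfl⟩
        refine ⟨?_, y, ?_, rfl⟩
        · rw [hbase]; exact Set.mem_biUnion hc hxc
        · rw [hbase]; exact Set.mem_biUnion hc' hyc'
    rw [heq, measure_biUnion_finset]
    · rintro ⟨c, c'⟩ hp ⟨d, d'⟩ hq hne
      simp only [Finset.mem_coe, Finset.mem_product] at hp hq
      by_cases hcd : c = d
      · subst hcd
        have hcd' : c' ≠ d' := by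
          intro h; exact hne (by rw [h])
        have : Disjoint (T g '' V c') (T g '' V d') :=
          (Set.disjoint_image_iff (hinj g)).mpr (hdisj c' hp.2 d' hq.2 hcd')
        exact this.mono Set.inter_subset_right Set.inter_subset_right
      · exact (hdisj c hp.1 d hq.1 hcd).mono Set.inter_subset_left Set.inter_subset_left
    · rintro ⟨c, c'⟩ _
      exact (hVmeas c).inter (hmeas_img g (V c') (hVmeas c'))
  -- the value of each term for g ∈ E
  have hYterm : ∀ g ∈ E, ∀ p ∈ C ×ˢ C,
      μ (V p.1 ∩ T g '' V p.2) = if g = p.1 - p.2 then 1 / n else 0 := by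
    rintro g hg ⟨c, c'⟩ hp
    simp only [Finset.mem_product] at hp
    by_cases h : g = c - c'
    · subst h
      simpa using hcopy' c hp.1 c' hp.2
    · simp only [if_neg h]
      exact hsupport g hg c hp.1 c' hp.2 h
  -- the second claim
  have hsecond : ∑ g ∈ E, μ (Y ∩ T g '' Y) = n := by
    calc ∑ g ∈ E, μ (Y ∩ T g '' Y)
        = ∑ g ∈ E, ∑ p ∈ C ×ˢ C, μ (V p.1 ∩ T g '' V p.2) := by
          exact Finset.sum_congr rfl fun g _ => hYg g
      _ = ∑ g ∈ E, ∑ p ∈ C ×ˢ C, (if g = p.1 - p.2 then 1 / n else 0) := by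
          refine Finset.sum_congr rfl fun g hg => Finset.sum_congr rfl fun p hp => ?_
          exact hYterm g hg p hp
      _ = ∑ p ∈ C ×ˢ C, ∑ g ∈ E, (if g = p.1 - p.2 then 1 / n else 0) :=
          Finset.sum_comm
      _ = ∑ p ∈ C ×ˢ C, (1 / n : ℝ≥0∞) := by
          refine Finset.sum_congr rfl fun p hp => ?_
          simp only [Finset.mem_product] at hp
          rw [Finset.sum_ite_eq' E (p.1 - p.2) (fun _ => (1 / n : ℝ≥0∞))]
          rw [if_pos (hdiffE p.1 hp.1 p.2 hp.2)]
      _ = (C.card * C.card : ℝ≥0∞) * (1 / n) := by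
          rw [Finset.sum_const, Finset.card_product]
          simp [nsmul_eq_mul, Nat.cast_mul]
      _ = n := by
          rw [one_div, ← hn, mul_assoc, ENNReal.mul_inv_cancel hn0 hntop, mul_one]
  refine ⟨?_, hsecond⟩
  intro A B hAY hBY hA hB
  rw [hsecond]
  -- per-g bound
  have hterm : ∀ g ∈ E,
      μ (A ∩ T g '' B) ≤ ∑ p ∈ C ×ˢ C,
        (if g = p.1 - p.2 then min (μ (A ∩ V p.1)) (μ (B ∩ V p.2)) else 0) := by
    intro g hg
    have hcover : A ∩ T g '' B ⊆ ⋃ p ∈ C ×ˢ C, ((A ∩ V p.1) ∩ T g '' (B ∩ V p.2)) := by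
      rintro x ⟨hxA, y, hyB, rfl⟩
      have hxY := hAY hxA
      have hyY := hBY hyB
      rw [hbase] at hxY hyY
      simp only [Set.mem_iUnion] at hxY hyY
      obtain ⟨c, hc, hxc⟩ := hxY
      obtain ⟨c', hc', hyc'⟩ := hyY
      have hmem : T g y ∈ (A ∩ V c) ∩ T g '' (B ∩ V c') := ⟨⟨hxA, hxc⟩, y, ⟨hyB, hyc'⟩, rfl⟩
      simp only [Set.mem_iUnion]
      exact ⟨(c, c'), Finset.mem_product.mpr ⟨hc, hc'⟩, hmem⟩
    calc μ (A ∩ T g '' B) ≤ μ (⋃ p ∈ C ×ˢ C, ((A ∩ V p.1) ∩ T g '' (B ∩ V p.2))) :=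
          measure_mono hcover
      _ ≤ ∑ p ∈ C ×ˢ C, μ ((A ∩ V p.1) ∩ T g '' (B ∩ V p.2)) :=
          measure_biUnion_finset_le _ _
      _ ≤ ∑ p ∈ C ×ˢ C, (if g = p.1 - p.2 then min (μ (A ∩ V p.1)) (μ (B ∩ V p.2)) else 0) := by
          refine Finset.sum_le_sum ?_
          rintro ⟨c, c'⟩ hp
          simp only [Finset.mem_product] at hp
          by_cases h : g = c - c'
          · simp only [if_pos h]
            refine le_min (measure_mono ?_) ?_
            · exact Set.inter_subset_left
            · calc μ ((A ∩ V c) ∩ T g '' (B ∩ V c')) ≤ μ (T g '' (B ∩ V c')) :=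
                    measure_mono Set.inter_subset_right
                _ = μ (B ∩ V c') := hmu_img g _ (hB.inter (hVmeas c'))
          · simp only [if_neg h]
            refine le_of_le_of_eq (measure_mono ?_) (hsupport g hg c hp.1 c' hp.2 h)
            exact Set.inter_subset_inter Set.inter_subset_right (Set.image_mono Set.inter_subset_right)
  calc ∑ g ∈ E, μ (A ∩ T g '' B)
      ≤ ∑ g ∈ E, ∑ p ∈ C ×ˢ C,
          (if g = p.1 - p.2 then min (μ (A ∩ V p.1)) (μ (B ∩ V p.2)) else 0) :=
        Finset.sum_le_sum hterm
    _ = ∑ p ∈ C ×ˢ C, ∑ g ∈ E,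
          (if g = p.1 - p.2 then min (μ (A ∩ V p.1)) (μ (B ∩ V p.2)) else 0) :=
        Finset.sum_comm
    _ ≤ ∑ p ∈ C ×ˢ C, min (μ (A ∩ V p.1)) (μ (B ∩ V p.2)) := by
        refine Finset.sum_le_sum ?_
        rintro p hp
        rw [Finset.sum_ite_eq' E (p.1 - p.2)]
        split_ifs <;> simp
    _ ≤ min (μ A) (μ B) * n := by
        rcases min_cases (μ A) (μ B) with ⟨hmin, hle⟩ | ⟨hmin, hle⟩
        · rw [hmin]
          calc ∑ p ∈ C ×ˢ C, min (μ (A ∩ V p.1)) (μ (B ∩ V p.2))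
              ≤ ∑ p ∈ C ×ˢ C, μ (A ∩ V p.1) :=
                Finset.sum_le_sum fun p _ => min_le_left _ _
            _ = ∑ c ∈ C, ∑ c' ∈ C, μ (A ∩ V c) := by rw [Finset.sum_product]
            _ = ∑ c ∈ C, (C.card : ℝ≥0∞) * μ (A ∩ V c) := by
                refine Finset.sum_congr rfl fun c _ => ?_
                rw [Finset.sum_const, nsmul_eq_mul]
            _ = n * ∑ c ∈ C, μ (A ∩ V c) := by rw [Finset.mul_sum]
            _ = μ A * n := by rw [← hsum_decomp A hA hAY, mul_comm]
        · rw [hmin]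
          calc ∑ p ∈ C ×ˢ C, min (μ (A ∩ V p.1)) (μ (B ∩ V p.2))
              ≤ ∑ p ∈ C ×ˢ C, μ (B ∩ V p.2) :=
                Finset.sum_le_sum fun p _ => min_le_right _ _
            _ = ∑ c ∈ C, ∑ c' ∈ C, μ (B ∩ V c') := by rw [Finset.sum_product]
            _ = ∑ c' ∈ C, ∑ c ∈ C, μ (B ∩ V c') := Finset.sum_comm
            _ = ∑ c' ∈ C, (C.card : ℝ≥0∞) * μ (B ∩ V c') := by
                refine Finset.sum_congr rfl fun c _ => ?_
                rw [Finset.sum_const, nsmul_eq_mul]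
            _ = n * ∑ c' ∈ C, μ (B ∩ V c') := by rw [Finset.mul_sum]
            _ = μ B * n := by rw [← hsum_decomp B hB hBY, mul_comm]
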